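/- Let y(x) ∈ 1 + x²ℚ[r][[x²]] be the unique power series solving Σ_{i=0}^{⌊r/2⌋} binom(r+1,2i+1) x^{2i} y^{r−2i} = r+1, and define y₁ = ((y+x)^{r+1} + (y−x)^{r+1})/(2(r+1)). Then the differential identity x·y₁′ − (r+1)·y₁ = (r+1)·x·y′ − y holds, where ′ denotes d/dx. Equivalently, writing y = Σ_g ã_g(r)(2x)^{2g}, the coefficient of (2x)^{2g} in y₁ equals ((2(r+1)g − 1)/(2g − r − 1))·ã_g(r) whenever 2g ≠ r+1. -/

import Mathlib

/-- `isSol r y` says that `y ∈ 1 + x²ℚ[[x²]]` and `y` solves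
`Σ_{i=0}^{⌊r/2⌋} binom(r+1, 2i+1) x^{2i} y^{r-2i} = r+1`. -/
def isSol (r : ℕ) (y : PowerSeries ℚ) : Prop :=
  PowerSeries.coeff 0 y = 1 ∧ (∀ n : ℕ, Odd n → PowerSeries.coeff n y = 0) ∧
    ∑ i ∈ Finset.range (r / 2 + 1),
        PowerSeries.C (Nat.choose (r + 1) (2 * i + 1) : ℚ) * PowerSeries.X ^ (2 * i)
          * y ^ (r - 2 * i)
      = PowerSeries.C ((r : ℚ) + 1)

/-- The second algebraic series `y₁ = ((y+x)^{r+1} + (y-x)^{r+1})/(2(r+1))`. -/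
noncomputable def yOne (r : ℕ) (y : PowerSeries ℚ) : PowerSeries ℚ :=
  PowerSeries.C (2 * ((r : ℚ) + 1))⁻¹ *
    ((y + PowerSeries.X) ^ (r + 1) + (y - PowerSeries.X) ^ (r + 1))

/-- The formal derivative `d/dx` of a power series. -/
noncomputable def psDeriv (f : PowerSeries ℚ) : PowerSeries ℚ :=
  PowerSeries.mk fun n => ((n : ℚ) + 1) * PowerSeries.coeff (n + 1) f

open PowerSeries Finset in
lemma psDeriv_eq (f : PowerSeries ℚ) : psDeriv f = PowerSeries.derivative ℚ f := by
  ext n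
  rw [psDeriv, coeff_mk, coeff_derivative]
  ring

open PowerSeries Finset in
lemma coeff_X_mul_psDeriv (f : PowerSeries ℚ) (n : ℕ) :
    PowerSeries.coeff n (PowerSeries.X * psDeriv f) = (n : ℚ) * PowerSeries.coeff n f := by
  cases n with
  | zero =>
    simp [PowerSeries.coeff_zero_eq_constantCoeff, map_mul]
  | succ n =>
    rw [PowerSeries.coeff_succ_X_mul, psDeriv, coeff_mk]
    push_cast
    ring

open PowerSeries Finset in
lemma sum_range_two_mul' {M : Type*} [AddCommMonoid M] (m : ℕ) (f : ℕ → M) :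
    ∑ j ∈ Finset.range (2 * m), f j = ∑ i ∈ Finset.range m, (f (2 * i) + f (2 * i + 1)) := by
  induction m with
  | zero => simp
  | succ n ih =>
    have h : 2 * (n + 1) = 2 * n + 1 + 1 := by ring
    rw [h, Finset.sum_range_succ, Finset.sum_range_succ, ih, Finset.sum_range_succ, add_assoc]

open PowerSeries Finset in
lemma key1 (r : ℕ) (y : PowerSeries ℚ)
    (h3 : ∑ i ∈ Finset.range (r / 2 + 1),
        PowerSeries.C (Nat.choose (r + 1) (2 * i + 1) : ℚ) * PowerSeries.X ^ (2 * i)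
          * y ^ (r - 2 * i) = PowerSeries.C ((r : ℚ) + 1)) :
    (y + X) ^ (r + 1) - (y - X) ^ (r + 1)
      = PowerSeries.C (2 * ((r : ℚ) + 1)) * X := by
  have expand : (y + X) ^ (r + 1) - (y - X) ^ (r + 1)
      = ∑ j ∈ Finset.range (r + 2),
          (y ^ (r + 1 - j) * X ^ j - y ^ (r + 1 - j) * (-X) ^ j)
            * (Nat.choose (r + 1) j : PowerSeries ℚ) := by
    rw [sub_eq_add_neg y X, add_pow, add_pow, ← Finset.sum_sub_distrib,
      ← Finset.sum_range_reflect]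
    apply Finset.sum_congr rfl
    intro j hj
    rw [Finset.mem_range] at hj
    have h0 : r + 2 - 1 - j = r + 1 - j := by omega
    have h1 : r + 1 - (r + 1 - j) = j := by omega
    have h2 : (r + 1).choose (r + 1 - j) = (r + 1).choose j := Nat.choose_symm (by omega)
    rw [h0, h1, h2, sub_mul]
  rw [expand, map_mul, ← h3, Finset.mul_sum, Finset.sum_mul]
  have step : ∀ S : PowerSeries ℚ, ∑ j ∈ Finset.range (2 * (r / 2 + 1)),
      (y ^ (r + 1 - j) * X ^ j - y ^ (r + 1 - j) * (-X) ^ j)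
        * (Nat.choose (r + 1) j : PowerSeries ℚ) + S
      = ∑ i ∈ Finset.range (r / 2 + 1),
          PowerSeries.C 2 * (PowerSeries.C (Nat.choose (r + 1) (2 * i + 1) : ℚ)
            * X ^ (2 * i) * y ^ (r - 2 * i)) * X + S := by
    intro S
    congr 1
    rw [sum_range_two_mul']
    apply Finset.sum_congr rfl
    intro i hi
    have e1 : (-X : PowerSeries ℚ) ^ (2 * i) = X ^ (2 * i) := Even.neg_pow ⟨i, by ring⟩ _
    have e2 : (-X : PowerSeries ℚ) ^ (2 * i + 1) = -X ^ (2 * i + 1) := Odd.neg_pow ⟨i, by ring⟩ _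
    have e3 : r + 1 - (2 * i + 1) = r - 2 * i := by omega
    have e4 : ((Nat.choose (r + 1) (2 * i + 1) : PowerSeries ℚ))
        = PowerSeries.C ((Nat.choose (r + 1) (2 * i + 1)) : ℚ) := (map_natCast _ _).symm
    rw [e1, e2, e3, e4, show (PowerSeries.C (2 : ℚ) : PowerSeries ℚ) = 2 from map_ofNat _ 2]
    ring
  rcases Nat.even_or_odd r with ⟨s, hs⟩ | ⟨s, hs⟩
  · have hm : r + 2 = 2 * (r / 2 + 1) := by omega
    rw [hm]
    have := step 0
    simpa using this
  · have hm : r + 2 = 2 * (r / 2 + 1) + 1 := by omega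
    rw [hm, Finset.sum_range_succ]
    have hz : (y ^ (r + 1 - (2 * (r / 2 + 1))) * X ^ (2 * (r / 2 + 1))
        - y ^ (r + 1 - (2 * (r / 2 + 1))) * (-X) ^ (2 * (r / 2 + 1)))
          * (Nat.choose (r + 1) (2 * (r / 2 + 1)) : PowerSeries ℚ) = 0 := by
      rw [Even.neg_pow ⟨r / 2 + 1, by ring⟩, sub_self, zero_mul]
    rw [hz, add_zero]
    have := step 0
    simpa using this

open PowerSeries Finset in
lemma hCr (r : ℕ) : PowerSeries.C ((r : ℚ) + 1) = (r : PowerSeries ℚ) + 1 := by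
  rw [map_add, map_one, map_natCast]

open PowerSeries Finset in
lemma part1 (r : ℕ) (y : PowerSeries ℚ)
    (K1 : (y + X) ^ (r + 1) - (y - X) ^ (r + 1)
      = PowerSeries.C (2 * ((r : ℚ) + 1)) * X) :
    PowerSeries.X * psDeriv (yOne r y)
      - PowerSeries.C ((r : ℚ) + 1) * yOne r y
      = PowerSeries.C ((r : ℚ) + 1) * PowerSeries.X * psDeriv y - y := by
  rw [yOne]
  have hDP : PowerSeries.derivative ℚ ((y + X) ^ (r + 1))
      = PowerSeries.C ((r : ℚ) + 1) * ((y + X) ^ r * (PowerSeries.derivative ℚ y + 1)) := by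
    rw [Derivation.leibniz_pow, hCr]
    simp only [Nat.add_sub_cancel, map_add, PowerSeries.derivative_X, smul_eq_mul, nsmul_eq_mul]
    push_cast
    ring
  have hDQ : PowerSeries.derivative ℚ ((y - X) ^ (r + 1))
      = PowerSeries.C ((r : ℚ) + 1) * ((y - X) ^ r * (PowerSeries.derivative ℚ y - 1)) := by
    rw [Derivation.leibniz_pow, hCr]
    simp only [Nat.add_sub_cancel, map_sub, PowerSeries.derivative_X, smul_eq_mul, nsmul_eq_mul]
    push_cast
    ring
  have K2 : PowerSeries.C ((r : ℚ) + 1) * ((y + X) ^ r * (PowerSeries.derivative ℚ y + 1))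
      - PowerSeries.C ((r : ℚ) + 1) * ((y - X) ^ r * (PowerSeries.derivative ℚ y - 1))
      = PowerSeries.C (2 * ((r : ℚ) + 1)) := by
    have := congrArg (PowerSeries.derivative ℚ) K1
    rw [map_sub, hDP, hDQ, Derivation.leibniz, PowerSeries.derivative_X,
      PowerSeries.derivative_C, smul_zero, add_zero, smul_eq_mul, mul_one] at this
    exact this
  rw [psDeriv_eq, psDeriv_eq, Derivation.leibniz, PowerSeries.derivative_C, smul_zero,
    add_zero, smul_eq_mul, map_add, hDP, hDQ]
  have hcc : PowerSeries.C (2 * ((r : ℚ) + 1)) * PowerSeries.C (2 * ((r : ℚ) + 1))⁻¹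
      = 1 := by
    rw [← map_mul, mul_inv_cancel₀ (by positivity), map_one]
  apply mul_left_cancel₀ (a := PowerSeries.C (2 * ((r : ℚ) + 1)))
  · intro h
    have h0 := congrArg (PowerSeries.constantCoeff) h
    simp at h0
    have hnn : (0 : ℚ) ≤ (r : ℚ) := Nat.cast_nonneg r
    linarith
  · rw [pow_succ (y + X) r, pow_succ (y - X) r] at K1
    linear_combination
      (X * (PowerSeries.C ((r : ℚ) + 1) * ((y + X) ^ r * (PowerSeries.derivative ℚ y + 1))
        + PowerSeries.C ((r : ℚ) + 1) * ((y - X) ^ r * (PowerSeries.derivative ℚ y - 1)))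
        - PowerSeries.C ((r : ℚ) + 1) * ((y + X) ^ r * (y + X) + (y - X) ^ r * (y - X))) * hcc
      + PowerSeries.C ((r : ℚ) + 1) * (PowerSeries.derivative ℚ y) * K1
      - y * K2

/-- For `y` the solution of `Σ binom(r+1,2i+1)x^{2i}y^{r-2i} = r+1` and
`y₁ = ((y+x)^{r+1}+(y-x)^{r+1})/(2(r+1))`, the differential identity
`x·y₁′ - (r+1)·y₁ = (r+1)·x·y′ - y` holds; equivalently, writing `y = Σ ã_g(r)(2x)^{2g}`,
the coefficient of `(2x)^{2g}` in `y₁` equals `((2(r+1)g-1)/(2g-r-1))·ã_g(r)` whenever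
`2g ≠ r+1`. -/
theorem stmt10 (r : ℕ) (hr : 2 ≤ r) (y : PowerSeries ℚ) (hy : isSol r y) :
    (PowerSeries.X * psDeriv (yOne r y) - PowerSeries.C ((r : ℚ) + 1) * yOne r y
        = PowerSeries.C ((r : ℚ) + 1) * PowerSeries.X * psDeriv y - y) ∧
    ∀ g : ℕ, 2 * g ≠ r + 1 →
      PowerSeries.coeff (2 * g) (yOne r y)
        = ((2 * ((r : ℚ) + 1) * (g : ℚ) - 1) / (2 * (g : ℚ) - (r : ℚ) - 1)) *
            PowerSeries.coeff (2 * g) y := by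
  have K1 := key1 r y hy.2.2
  have h1 := part1 r y K1
  refine ⟨h1, fun g hg => ?_⟩
  have hc := congrArg (PowerSeries.coeff (2 * g)) h1
  rw [map_sub, map_sub, coeff_X_mul_psDeriv, PowerSeries.coeff_C_mul, mul_assoc,
    PowerSeries.coeff_C_mul, coeff_X_mul_psDeriv] at hc
  push_cast at hc
  have hd : 2 * (g : ℚ) - (r : ℚ) - 1 ≠ 0 := by
    intro hz
    apply hg
    have : ((2 * g : ℕ) : ℚ) = ((r + 1 : ℕ) : ℚ) := by push_cast; linarith
    exact_mod_cast this
  rw [div_mul_eq_mul_div, eq_div_iff hd]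
  linear_combination hc
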